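/- For all α > 0 and k ≥ 1, if β·k < 1 and (1+α)^k ≤ 1 + β·k with β > α > 0, then k ≤ ln(2) · (1+α)/α. -/

import Mathlib

theorem stmt_1 (k α β : ℝ) (hk : 1 ≤ k) (hα : 0 < α) (hαβ : α < β) (hβk : β * k < 1)
    (h : (1 + α) ^ k ≤ 1 + β * k) :
    k ≤ Real.log 2 * ((1 + α) / α) := by
  have h1α : (0:ℝ) < 1 + α := by linarith
  -- lower bound on log(1+α)
  have hlog_low : α / (1 + α) ≤ Real.log (1 + α) := by
    have := Real.log_le_sub_one_of_pos (x := 1 / (1 + α)) (by positivity)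
    rw [Real.log_div one_ne_zero (ne_of_gt h1α), Real.log_one] at this
    have h2 : 1 / (1 + α) - 1 = -(α / (1 + α)) := by field_simp; ring
    linarith [this, h2 ▸ this]
  have hlogpos : 0 < Real.log (1 + α) := lt_of_lt_of_le (by positivity) hlog_low
  -- (1+α)^k ≤ 2
  have h2 : (1 + α) ^ k ≤ 2 := by linarith
  have hklog : k * Real.log (1 + α) ≤ Real.log 2 := by
    have := Real.log_le_log (by positivity) h2
    rwa [Real.log_rpow h1α] at this
  have hk2 : k ≤ Real.log 2 / Real.log (1 + α) := (le_div_iff₀ hlogpos).mpr hklog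
  have hfinal : Real.log 2 / Real.log (1 + α) ≤ Real.log 2 * ((1 + α) / α) := by
    rw [div_le_iff₀ hlogpos]
    have hlog2 : 0 < Real.log 2 := Real.log_pos (by norm_num)
    have : α / (1 + α) * ((1 + α) / α) = 1 := by field_simp
    calc Real.log 2 = Real.log 2 * (α / (1 + α) * ((1 + α) / α)) := by rw [this]; ring
      _ ≤ Real.log 2 * (Real.log (1 + α) * ((1 + α) / α)) := by
          apply mul_le_mul_of_nonneg_left _ hlog2.le
          exact mul_le_mul_of_nonneg_right hlog_low (by positivity)
      _ = Real.log 2 * ((1 + α) / α) * Real.log (1 + α) := by ring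
  linarith
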